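/- arXiv:1709.04721 — 4 statements merged into one kernel-verified Lean document; each statement's English description precedes it below -/
import Mathlib

section
/- Let N ≥ 2 be an even integer. Then the identity is the only based automorphism of the fusion ring R_N; that is, every ring automorphism of R_N whose underlying ℤ-linear map permutes the basis {b_0, b_1, …, b_{N−1}} is the identity map. (The A_N fusion ring has no non-trivial automorphisms when N is even.) -/
open Finset

/-- The support set of the product `b j * b k` in the `A_N` fusion ring. -/
private def aS (N : ℕ) (j k : Fin N) : Finset (Fin N) :=
  Finset.univ.filter (fun m : Fin N =>
    m.val % 2 = (j.val + k.val) % 2 ∧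
    j.val - k.val ≤ m.val ∧ k.val - j.val ≤ m.val ∧
    m.val ≤ j.val + k.val ∧ m.val ≤ 2 * (N - 1) - (j.val + k.val))

private lemma mem_aS {N : ℕ} {j k m : Fin N} :
    m ∈ aS N j k ↔
      (m.val % 2 = (j.val + k.val) % 2 ∧
      j.val - k.val ≤ m.val ∧ k.val - j.val ≤ m.val ∧
      m.val ≤ j.val + k.val ∧ m.val ≤ 2 * (N - 1) - (j.val + k.val)) := by
  simp [aS]

private lemma sum_basis_inj {N : ℕ} {R : Type*} [CommRing R] (B : Module.Basis (Fin N) ℤ R)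
    {s t : Finset (Fin N)} (h : ∑ m ∈ s, B m = ∑ m ∈ t, B m) : s = t := by
  ext x
  have h2 := congrArg (fun y => B.repr y x) h
  simp only [map_sum, Module.Basis.repr_self, Finsupp.finset_sum_apply,
    Finsupp.single_apply] at h2
  by_cases hs : x ∈ s <;> by_cases ht : x ∈ t <;>
    simp [Finset.sum_ite_eq' , hs, ht] at h2 ⊢ <;> tauto

private lemma card_aS {N : ℕ} (hN : 2 ≤ N) (j : Fin N) :
    (aS N j j).card = min j.val (N - 1 - j.val) + 1 := by
  have hj := j.isLt
  set L := min j.val (N - 1 - j.val) with hL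
  have hLN : 2 * L ≤ N - 1 := by omega
  have key : aS N j j = (Finset.range (L + 1)).image
      (fun i => (⟨2 * i % N, Nat.mod_lt _ (by omega)⟩ : Fin N)) := by
    ext m
    simp only [mem_aS, Finset.mem_image, Finset.mem_range]
    constructor
    · rintro ⟨h1, h2, h3, h4, h5⟩
      refine ⟨m.val / 2, by omega, ?_⟩
      apply Fin.ext
      show 2 * (m.val / 2) % N = m.val
      have hm := m.isLt
      rw [Nat.mod_eq_of_lt (by omega)]
      omega
    · rintro ⟨i, hi, rfl⟩
      simp only
      have h2i : 2 * i % N = 2 * i := Nat.mod_eq_of_lt (by omega)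
      omega
  rw [key, Finset.card_image_of_injOn, Finset.card_range]
  intro a ha b hb hab
  simp only [Finset.coe_range, Set.mem_Iio] at ha hb
  have hab' : 2 * a % N = 2 * b % N := congrArg Fin.val hab
  have h2a : 2 * a % N = 2 * a := Nat.mod_eq_of_lt (by omega)
  have h2b : 2 * b % N = 2 * b := Nat.mod_eq_of_lt (by omega)
  omega

/-- Let `N ≥ 2` be an even integer.  Let `R` be (a realization of) the
fusion ring `R_N` of the `A_N` fusion categories: a commutative ring which is free as a
`ℤ`-module with basis `b_0, …, b_{N-1}`, where `b_0 = 1` and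
`b_j · b_k = Σ b_m` over all `m` with `m ≡ j + k (mod 2)` and
`|j − k| ≤ m ≤ min (j + k) (2(N−1) − j − k)`.
Then the identity is the only based automorphism of `R_N`: every ring automorphism of `R`
whose underlying `ℤ`-linear map permutes the basis `{b_0, …, b_{N-1}}` is the identity. -/
theorem aN_fusion_ring_no_nontrivial_based_automorphism_of_even
    {N : ℕ} (hN : 2 ≤ N) (hNeven : Even N)
    {R : Type*} [CommRing R] (B : Module.Basis (Fin N) ℤ R)
    (hone : B ⟨0, by omega⟩ = 1)
    (hmul : ∀ j k : Fin N, B j * B k =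
      ∑ m ∈ Finset.univ.filter (fun m : Fin N =>
        m.val % 2 = (j.val + k.val) % 2 ∧
        j.val - k.val ≤ m.val ∧ k.val - j.val ≤ m.val ∧
        m.val ≤ j.val + k.val ∧ m.val ≤ 2 * (N - 1) - (j.val + k.val)), B m)
    (f : R ≃+* R) (π : Equiv.Perm (Fin N))
    (hf : ∀ i : Fin N, f (B i) = B (π i)) :
    f = RingEquiv.refl R := by
  have hmul' : ∀ j k : Fin N, B j * B k = ∑ m ∈ aS N j k, B m := hmul
  -- the permutation transforms support sets correctly
  have image_S : ∀ j k : Fin N, (aS N j k).image π = aS N (π j) (π k) := by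
    intro j k
    apply sum_basis_inj B
    rw [Finset.sum_image (fun a _ b _ h => π.injective h)]
    have h1 : ∑ m ∈ aS N j k, B (π m) = f (B j * B k) := by
      rw [hmul' j k, map_sum]
      exact Finset.sum_congr rfl (fun m _ => (hf m).symm)
    rw [h1, map_mul, hf, hf, hmul']
  have mem_iff : ∀ j k m : Fin N, m ∈ aS N j k ↔ π m ∈ aS N (π j) (π k) := by
    intro j k m
    rw [← image_S j k]
    constructor
    · exact fun h => Finset.mem_image_of_mem _ h
    · intro h
      obtain ⟨a, ha, hEq⟩ := Finset.mem_image.mp h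
      rwa [← π.injective hEq]
  -- parity invariant
  have even_iff : ∀ j : Fin N, j.val % 2 = 0 ↔ ∃ k : Fin N, j ∈ aS N k k := by
    intro j
    have hj := j.isLt
    constructor
    · intro h
      refine ⟨⟨j.val / 2, by omega⟩, ?_⟩
      rw [mem_aS]
      simp only
      omega
    · rintro ⟨k, hk⟩
      rw [mem_aS] at hk
      omega
  have parity : ∀ j : Fin N, (π j).val % 2 = j.val % 2 := by
    intro j
    have h1 : j.val % 2 = 0 ↔ (π j).val % 2 = 0 := by
      rw [even_iff, even_iff]
      constructor
      · rintro ⟨k, hk⟩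
        exact ⟨π k, (mem_iff k k j).mp hk⟩
      · rintro ⟨k, hk⟩
        refine ⟨π.symm k, ?_⟩
        have h2 := (mem_iff (π.symm k) (π.symm k) j).mpr
        simp only [Equiv.apply_symm_apply] at h2
        exact h2 hk
    omega
  -- cardinality invariant
  have hπ : ∀ j : Fin N, π j = j := by
    intro j
    have hc : (aS N j j).card = (aS N (π j) (π j)).card := by
      rw [← image_S j j, Finset.card_image_of_injective _ π.injective]
    rw [card_aS hN j, card_aS hN (π j)] at hc
    have hp := parity j
    have h1 := j.isLt
    have h2 := (π j).isLt
    have hN2 : N % 2 = 0 := Nat.even_iff.mp hNeven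
    apply Fin.ext
    omega
  -- conclude
  have key : ∀ i : Fin N, f (B i) = B i := fun i => by rw [hf, hπ]
  have hl : ((f : R →+* R) : R →+ R).toIntLinearMap
      = (AddMonoidHom.id R).toIntLinearMap := B.ext fun i => key i
  exact RingEquiv.ext fun x => LinearMap.congr_fun hl x
end

section
/- Let N ≥ 5 be an odd integer. The ℤ-linear map σ : R_N → R_N defined on the basis by σ(b_n) = b_n for n even and σ(b_n) = b_{N−1−n} for n odd is a based automorphism of R_N different from the identity, and every based automorphism of R_N equals either the identity or σ; in particular, the group of based automorphisms of R_N has order exactly 2. -/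
section ANAux

variable {N : ℕ} {R : Type*} [CommRing R]

/-- Sums of distinct basis vectors determine the index set. -/
lemma anSum_basis_inj (B : Module.Basis (Fin N) ℤ R) {s t : Finset (Fin N)}
    (h : ∑ m ∈ s, B m = ∑ m ∈ t, B m) : s = t := by
  ext i
  have h2 := congrArg (fun x => B.repr x i) h
  simp only [map_sum, Module.Basis.repr_self, Finset.sum_apply', Finsupp.single_apply] at h2
  rw [Finset.sum_ite_eq' s i fun _ => 1, Finset.sum_ite_eq' t i fun _ => 1] at h2
  by_cases hs : i ∈ s <;> by_cases ht : i ∈ t <;> simp [hs, ht] at h2 ⊢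

/-- The underlying function of the candidate permutation. -/
def anFun (N : ℕ) : Fin N → Fin N := fun n =>
  ⟨if n.val % 2 = 0 then n.val else N - 1 - n.val, by have := n.isLt; split_ifs <;> omega⟩

lemma anFun_invol (hodd : N % 2 = 1) : Function.Involutive (anFun N) := by
  intro n
  have hn := n.isLt
  apply Fin.ext
  show (if (if n.val % 2 = 0 then n.val else N - 1 - n.val) % 2 = 0
      then (if n.val % 2 = 0 then n.val else N - 1 - n.val)
      else N - 1 - (if n.val % 2 = 0 then n.val else N - 1 - n.val)) = n.val
  split_ifs <;> omega

/-- The candidate permutation: identity on even indices, `n ↦ N-1-n` on odd indices. -/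
def anPerm (hodd : N % 2 = 1) : Equiv.Perm (Fin N) :=
  (anFun_invol hodd).toPerm

lemma anPerm_val (hodd : N % 2 = 1) (n : Fin N) :
    (anPerm hodd n).val = if n.val % 2 = 0 then n.val else N - 1 - n.val := rfl

lemma anPerm_invol (hodd : N % 2 = 1) (n : Fin N) :
    anPerm hodd (anPerm hodd n) = n :=
  anFun_invol hodd n

/-- Any ring automorphism fixing every basis vector is the identity. -/
lemma anRingEquiv_eq_refl (B : Module.Basis (Fin N) ℤ R) (f : R ≃+* R)
    (h : ∀ i, f (B i) = B i) : f = RingEquiv.refl R := by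
  have hmap : (f : R →+* R).toAddMonoidHom.toIntLinearMap = LinearMap.id :=
    B.ext fun i => by simpa using h i
  ext x
  exact congrArg (fun (g : R →ₗ[ℤ] R) => g x) hmap

/-- Promote a basis-permutation linear equivalence to a ring equivalence. -/
noncomputable def anSigma (B : Module.Basis (Fin N) ℤ R) (p : Equiv.Perm (Fin N))
    (h : ∀ x y : R, B.equiv B p (x * y) = B.equiv B p x * B.equiv B p y) : R ≃+* R :=
  { (B.equiv B p).toAddEquiv with map_mul' := h }

lemma anSigma_apply (B : Module.Basis (Fin N) ℤ R) (p : Equiv.Perm (Fin N))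
    (h : ∀ x y : R, B.equiv B p (x * y) = B.equiv B p x * B.equiv B p y) (i : Fin N) :
    anSigma B p h (B i) = B (p i) :=
  B.equiv_apply i B p

/-- The basic fusion rule `b₁ bₐ = b_{a-1} + b_{a+1}`. -/
lemma anHmul1 (hN : 5 ≤ N) (B : Module.Basis (Fin N) ℤ R)
    (hmul : ∀ j k : Fin N, B j * B k =
      ∑ m ∈ Finset.univ.filter (fun m : Fin N =>
        m.val % 2 = (j.val + k.val) % 2 ∧
        j.val - k.val ≤ m.val ∧ k.val - j.val ≤ m.val ∧
        m.val ≤ j.val + k.val ∧ m.val ≤ 2 * (N - 1) - (j.val + k.val)), B m)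
    (a : ℕ) (ha1 : 1 ≤ a) (ha : a + 1 < N) :
    B ⟨1, by omega⟩ * B ⟨a, by omega⟩ = B ⟨a - 1, by omega⟩ + B ⟨a + 1, ha⟩ := by
  rw [hmul ⟨1, by omega⟩ ⟨a, by omega⟩]
  have hset : Finset.univ.filter (fun m : Fin N =>
      m.val % 2 = ((1 : ℕ) + a) % 2 ∧
      1 - a ≤ m.val ∧ a - 1 ≤ m.val ∧
      m.val ≤ 1 + a ∧ m.val ≤ 2 * (N - 1) - (1 + a)) =
      {(⟨a - 1, by omega⟩ : Fin N), ⟨a + 1, ha⟩} := by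
    ext m
    simp only [Finset.mem_filter, Finset.mem_univ, true_and, Finset.mem_insert,
      Finset.mem_singleton, Fin.ext_iff]
    have := m.isLt
    omega
  rw [hset, Finset.sum_pair (by simp only [ne_eq, Fin.mk.injEq]; omega)]

/-- Any based automorphism fixing `b₁` is the identity. -/
lemma anFix (hN : 5 ≤ N) (B : Module.Basis (Fin N) ℤ R)
    (hone : B ⟨0, Nat.pos_of_ne_zero (by omega)⟩ = 1)
    (hmul : ∀ j k : Fin N, B j * B k =
      ∑ m ∈ Finset.univ.filter (fun m : Fin N =>
        m.val % 2 = (j.val + k.val) % 2 ∧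
        j.val - k.val ≤ m.val ∧ k.val - j.val ≤ m.val ∧
        m.val ≤ j.val + k.val ∧ m.val ≤ 2 * (N - 1) - (j.val + k.val)), B m)
    (f : R ≃+* R) (π : Equiv.Perm (Fin N))
    (hf : ∀ i : Fin N, f (B i) = B (π i)) (h1 : π ⟨1, by omega⟩ = ⟨1, by omega⟩) :
    f = RingEquiv.refl R := by
  have hπ0 : π ⟨0, by omega⟩ = ⟨0, by omega⟩ := by
    apply B.injective
    rw [← hf, hone, map_one]
  have key : ∀ k, ∀ hk : k < N, π ⟨k, hk⟩ = ⟨k, hk⟩ := by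
    intro k
    induction k using Nat.strong_induction_on with
    | _ k ih =>
      intro hk
      rcases k with _ | _ | k
      · exact hπ0
      · exact h1
      · have hk1 : k + 1 < N := by omega
        have hk0 : k < N := by omega
        have e1 : B ⟨1, by omega⟩ * B ⟨k + 1, hk1⟩ = B ⟨k, hk0⟩ + B ⟨k + 2, hk⟩ :=
          anHmul1 hN B hmul (k+1) (by omega) hk
        have e2 := congrArg f e1
        rw [map_mul, map_add, hf, hf, hf, hf, h1, ih (k+1) (by omega) hk1, e1,
          ih k (by omega) hk0] at e2
        have e3 := add_left_cancel e2
        exact (B.injective e3.symm)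
  apply anRingEquiv_eq_refl B f
  intro i
  rw [hf]
  congr 1
  have := key i.1 i.2
  simpa using this

/-- The candidate permutation respects the fusion coefficients. -/
lemma anCond (hN : 5 ≤ N) (hodd : N % 2 = 1) (j k m : Fin N)
    (hm : m.val % 2 = (j.val + k.val) % 2 ∧
        j.val - k.val ≤ m.val ∧ k.val - j.val ≤ m.val ∧
        m.val ≤ j.val + k.val ∧ m.val ≤ 2 * (N - 1) - (j.val + k.val)) :
    (anPerm hodd m).val % 2 = ((anPerm hodd j).val + (anPerm hodd k).val) % 2 ∧
      (anPerm hodd j).val - (anPerm hodd k).val ≤ (anPerm hodd m).val ∧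
      (anPerm hodd k).val - (anPerm hodd j).val ≤ (anPerm hodd m).val ∧
      (anPerm hodd m).val ≤ (anPerm hodd j).val + (anPerm hodd k).val ∧
      (anPerm hodd m).val ≤ 2 * (N - 1) - ((anPerm hodd j).val + (anPerm hodd k).val) := by
  rw [anPerm_val, anPerm_val, anPerm_val]
  have hj := j.isLt
  have hk := k.isLt
  have hmlt := m.isLt
  split_ifs <;> omega

/-- The linear equivalence induced by the candidate permutation is multiplicative. -/
lemma anMulSigma (hN : 5 ≤ N) (hodd : N % 2 = 1) (B : Module.Basis (Fin N) ℤ R)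
    (hmul : ∀ j k : Fin N, B j * B k =
      ∑ m ∈ Finset.univ.filter (fun m : Fin N =>
        m.val % 2 = (j.val + k.val) % 2 ∧
        j.val - k.val ≤ m.val ∧ k.val - j.val ≤ m.val ∧
        m.val ≤ j.val + k.val ∧ m.val ≤ 2 * (N - 1) - (j.val + k.val)), B m) :
    ∀ x y : R, B.equiv B (anPerm hodd) (x * y)
      = B.equiv B (anPerm hodd) x * B.equiv B (anPerm hodd) y := by
  set p := anPerm hodd with hp
  have hcond : ∀ j k m : Fin N,
      m ∈ Finset.univ.filter (fun m : Fin N =>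
        m.val % 2 = (j.val + k.val) % 2 ∧
        j.val - k.val ≤ m.val ∧ k.val - j.val ≤ m.val ∧
        m.val ≤ j.val + k.val ∧ m.val ≤ 2 * (N - 1) - (j.val + k.val)) →
      p m ∈ Finset.univ.filter (fun m : Fin N =>
        m.val % 2 = ((p j).val + (p k).val) % 2 ∧
        (p j).val - (p k).val ≤ m.val ∧ (p k).val - (p j).val ≤ m.val ∧
        m.val ≤ (p j).val + (p k).val ∧ m.val ≤ 2 * (N - 1) - ((p j).val + (p k).val)) := by
    intro j k m hm
    simp only [Finset.mem_filter, Finset.mem_univ, true_and] at hm ⊢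
    exact anCond hN hodd j k m hm
  have h2 : (LinearMap.mul ℤ R).compr₂ (B.equiv B p : R →ₗ[ℤ] R)
      = (LinearMap.mul ℤ R).compl₁₂ (B.equiv B p : R →ₗ[ℤ] R) (B.equiv B p : R →ₗ[ℤ] R) := by
    apply B.ext; intro j
    apply B.ext; intro k
    simp only [LinearMap.compr₂_apply, LinearMap.compl₁₂_apply, LinearMap.mul_apply',
      LinearEquiv.coe_coe, Module.Basis.equiv_apply]
    rw [hmul j k, map_sum, hmul (p j) (p k)]
    refine Finset.sum_nbij' (fun m => p m) (fun m => p m) (hcond j k) ?_ ?_ ?_ ?_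
    · intro a ha
      have := hcond (p j) (p k) a ha
      rwa [hp, anPerm_invol, anPerm_invol] at this
    · intro a _; exact anPerm_invol _ _
    · intro a _; exact anPerm_invol _ _
    · intro a _
      rw [Module.Basis.equiv_apply]
  intro x y
  exact congrArg (fun (g : R →ₗ[ℤ] R →ₗ[ℤ] R) => g x y) h2

set_option maxHeartbeats 1600000 in
/-- The image of index `1` under any based automorphism is `1` or `N - 2`. -/
lemma anPiOne (hN : 5 ≤ N) (B : Module.Basis (Fin N) ℤ R)
    (hone : B ⟨0, Nat.pos_of_ne_zero (by omega)⟩ = 1)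
    (hmul : ∀ j k : Fin N, B j * B k =
      ∑ m ∈ Finset.univ.filter (fun m : Fin N =>
        m.val % 2 = (j.val + k.val) % 2 ∧
        j.val - k.val ≤ m.val ∧ k.val - j.val ≤ m.val ∧
        m.val ≤ j.val + k.val ∧ m.val ≤ 2 * (N - 1) - (j.val + k.val)), B m)
    (f : R ≃+* R) (π : Equiv.Perm (Fin N))
    (hf : ∀ i : Fin N, f (B i) = B (π i)) :
    (π ⟨1, by omega⟩).val = 1 ∨ (π ⟨1, by omega⟩).val = N - 2 := by
  have h0 : (0:ℕ) < N := by omega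
  have h1 : (1:ℕ) < N := by omega
  have h2 : (2:ℕ) < N := by omega
  have h4 : (4:ℕ) < N := by omega
  have hπ0 : π ⟨0, h0⟩ = ⟨0, h0⟩ := by
    apply B.injective
    rw [← hf, show B ⟨0, h0⟩ = 1 from hone, map_one]
  have hπ2ne : (π ⟨2, h2⟩).val ≠ 0 := by
    intro hcon
    have hcc : π ⟨2, h2⟩ = π ⟨0, h0⟩ := by rw [hπ0]; exact Fin.ext hcon
    have := π.injective hcc
    rw [Fin.mk.injEq] at this
    omega
  have hπ1ne : (π ⟨1, h1⟩).val ≠ 0 := by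
    intro hcon
    have hcc : π ⟨1, h1⟩ = π ⟨0, h0⟩ := by rw [hπ0]; exact Fin.ext hcon
    have := π.injective hcc
    rw [Fin.mk.injEq] at this
    omega
  have e11 : B ⟨1, h1⟩ * B ⟨1, h1⟩ = B ⟨0, h0⟩ + B ⟨2, h2⟩ :=
    anHmul1 hN B hmul 1 le_rfl (by omega)
  have e2 := congrArg f e11
  rw [map_mul, map_add] at e2
  simp only [hf] at e2
  rw [hπ0, hmul (π ⟨1, h1⟩) (π ⟨1, h1⟩)] at e2
  have hne' : (⟨0, h0⟩ : Fin N) ≠ π ⟨2, h2⟩ := fun hc => hπ2ne (congrArg Fin.val hc).symm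
  set a := (π ⟨1, h1⟩).val with haa
  have hTeq : (Finset.univ.filter (fun m : Fin N =>
      m.val % 2 = (a + a) % 2 ∧ a - a ≤ m.val ∧ a - a ≤ m.val ∧
      m.val ≤ a + a ∧ m.val ≤ 2 * (N - 1) - (a + a))) = {⟨0, h0⟩, π ⟨2, h2⟩} := by
    apply anSum_basis_inj B
    rw [Finset.sum_pair hne']
    exact e2
  have hmem : ∀ (v : ℕ) (hv : v < N),
      (v % 2 = (a + a) % 2 ∧ a - a ≤ v ∧ a - a ≤ v ∧ v ≤ a + a ∧
        v ≤ 2 * (N - 1) - (a + a))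
      ↔ (v = 0 ∨ (⟨v, hv⟩ : Fin N) = π ⟨2, h2⟩) := by
    intro v hv
    constructor
    · intro hm
      have hmem2 : (⟨v, hv⟩ : Fin N) ∈ ({⟨0, h0⟩, π ⟨2, h2⟩} : Finset (Fin N)) := by
        rw [← hTeq, Finset.mem_filter]
        exact ⟨Finset.mem_univ _, hm⟩
      rcases Finset.mem_insert.mp hmem2 with h | h
      · exact Or.inl (congrArg Fin.val h)
      · exact Or.inr (Finset.mem_singleton.mp h)
    · intro hm
      have hmem2 : (⟨v, hv⟩ : Fin N) ∈ ({⟨0, h0⟩, π ⟨2, h2⟩} : Finset (Fin N)) := by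
        rcases hm with h | h
        · exact Finset.mem_insert.mpr (Or.inl (Fin.ext h))
        · exact Finset.mem_insert.mpr (Or.inr (Finset.mem_singleton.mpr h))
      rw [← hTeq, Finset.mem_filter] at hmem2
      exact hmem2.2
  have haN : a < N := (π ⟨1, h1⟩).isLt
  have hcfacts := (hmem (π ⟨2, h2⟩).val (π ⟨2, h2⟩).isLt).mpr (Or.inr (Fin.ext rfl))
  obtain ⟨hc1, hc2, hc3, hc4, hc5⟩ := hcfacts
  by_contra hcon
  push_neg at hcon
  obtain ⟨hcon1, hcon2⟩ := hcon
  by_cases hbig : a = N - 1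
  · omega
  · have hx2 := (hmem 2 h2).mp (by omega)
    have hx4 := (hmem 4 h4).mp (by omega)
    rcases hx2 with h | hx2
    · omega
    rcases hx4 with h | hx4
    · omega
    rw [← hx2] at hx4
    rw [Fin.mk.injEq] at hx4
    omega

end ANAux

/-- Let `N ≥ 5` be an odd integer, and let `R` be (a realization of) the
fusion ring `R_N` of the `A_N` fusion categories, with `ℤ`-basis `b_0, …, b_{N-1}`,
`b_0 = 1`, and the `A_N` fusion rules.  The `ℤ`-linear map `σ` with `σ(b_n) = b_n` for
`n` even and `σ(b_n) = b_{N−1−n}` for `n` odd is a based ring automorphism of `R_N`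
different from the identity, and every based automorphism of `R_N` is either the identity
or `σ`; in particular the group of based automorphisms of `R_N` has order exactly `2`. -/
theorem aN_fusion_ring_based_automorphism_group_of_odd
    {N : ℕ} (hN : 5 ≤ N) (hNodd : Odd N)
    {R : Type*} [CommRing R] (B : Module.Basis (Fin N) ℤ R)
    (hone : B ⟨0, by omega⟩ = 1)
    (hmul : ∀ j k : Fin N, B j * B k =
      ∑ m ∈ Finset.univ.filter (fun m : Fin N =>
        m.val % 2 = (j.val + k.val) % 2 ∧
        j.val - k.val ≤ m.val ∧ k.val - j.val ≤ m.val ∧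
        m.val ≤ j.val + k.val ∧ m.val ≤ 2 * (N - 1) - (j.val + k.val)), B m) :
    ∃ σ : R ≃+* R,
      (∀ n : Fin N, σ (B n) =
        if n.val % 2 = 0 then B n else B ⟨N - 1 - n.val, by omega⟩) ∧
      (∃ π : Equiv.Perm (Fin N), ∀ i : Fin N, σ (B i) = B (π i)) ∧
      σ ≠ RingEquiv.refl R ∧
      (∀ f : R ≃+* R,
        (∃ π : Equiv.Perm (Fin N), ∀ i : Fin N, f (B i) = B (π i)) →
        f = RingEquiv.refl R ∨ f = σ) := by
  have hodd : N % 2 = 1 := Nat.odd_iff.mp hNodd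
  set p : Equiv.Perm (Fin N) := anPerm hodd with hp
  have hmulσ := anMulSigma hN hodd B hmul
  set σ : R ≃+* R := anSigma B p hmulσ with hσ
  have hσB : ∀ i : Fin N, σ (B i) = B (p i) := anSigma_apply B p hmulσ
  have hN2 : N - 2 < N := by omega
  have h1lt : (1:ℕ) < N := by omega
  have hp1 : p ⟨1, h1lt⟩ = ⟨N - 2, hN2⟩ := by
    apply Fin.ext
    show (if 1 % 2 = 0 then 1 else N - 1 - 1) = N - 2
    rw [if_neg (by omega)]
    omega
  have hσσ : σ.trans σ = RingEquiv.refl R := by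
    apply anRingEquiv_eq_refl B
    intro i
    show σ (σ (B i)) = B i
    rw [hσB, hσB, hp, anPerm_invol]
  refine ⟨σ, ?_, ⟨p, hσB⟩, ?_, ?_⟩
  · intro n
    rw [hσB]
    split_ifs with h
    · congr 1
      apply Fin.ext
      rw [hp, anPerm_val, if_pos h]
    · congr 1
      apply Fin.ext
      rw [hp, anPerm_val, if_neg h]
  · intro hcontra
    have h1 : σ (B ⟨1, h1lt⟩) = B ⟨1, h1lt⟩ := by rw [hcontra]; rfl
    rw [hσB, hp1] at h1
    have h2 := B.injective h1
    have h3 : N - 2 = 1 := congrArg Fin.val h2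
    omega
  · rintro f ⟨π, hf⟩
    set j1 : Fin N := ⟨1, h1lt⟩ with hj1
    rcases anPiOne hN B hone hmul f π hf with ha | ha
    · left
      have ha' : (π j1).val = 1 := ha
      refine anFix hN B hone hmul f π hf (show π j1 = j1 from Fin.ext ?_)
      rw [ha']
    · right
      have ha' : (π j1).val = N - 2 := ha
      have hg : ∀ i : Fin N, (f.trans σ) (B i) = B ((π.trans p) i) := by
        intro i
        show σ (f (B i)) = B (p (π i))
        rw [hf, hσB]
      have hg1 : (π.trans p) j1 = j1 := by
        show p (π j1) = j1
        apply Fin.ext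
        rw [hp, anPerm_val, ha', if_neg (by omega)]
        show N - 1 - (N - 2) = 1
        omega
      have hgid := anFix hN B hone hmul (f.trans σ) (π.trans p) hg hg1
      ext x
      have h1 : σ (f x) = x := by
        have := congrArg (fun (g : R ≃+* R) => g x) hgid
        simpa using this
      have h2 : σ (σ (f x)) = f x := by
        have := congrArg (fun (g : R ≃+* R) => g (f x)) hσσ
        simpa using this
      rw [h1] at h2
      exact h2.symm
end

section
/- In the fusion ring R_7, the ℤ-span S of b_0, b_2, b_4, b_6 is closed under multiplication (it is the fusion ring of the adjoint subcategory ad(A_7)). The ℤ-linear map that fixes b_0 and b_6 and exchanges b_2 and b_4 is a based automorphism of S, and it is the unique based automorphism of S other than the identity; in particular the group of based automorphisms of the fusion ring of ad(A_7) is cyclic of order 2. -/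
/-- The index `2i ∈ {0,2,4,6}` of an even basis vector of `R_7`. -/
abbrev evenIdx7 (i : Fin 4) : Fin 7 :=
  ⟨2 * i.val, by have := i.isLt; omega⟩

/-- The set of even-index basis vectors `{b_0, b_2, b_4, b_6}` of (a realization of)
the fusion ring `R_7`. -/
abbrev evenBasisSet7 {R : Type*} [CommRing R] (B : Module.Basis (Fin 7) ℤ R) : Set R :=
  Set.range fun i : Fin 4 => B (evenIdx7 i)

/-- The even basis vectors `b_0, b_2, b_4, b_6`, regarded as elements of the subring
(subalgebra) of `R_7` that they generate. -/
noncomputable def evenBasisGen7 {R : Type*} [CommRing R] (B : Module.Basis (Fin 7) ℤ R) (i : Fin 4) :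
    Algebra.adjoin ℤ (evenBasisSet7 B) :=
  ⟨B (evenIdx7 i), Algebra.subset_adjoin (Set.mem_range_self i)⟩

namespace AdA7Aux

variable {R : Type*} [CommRing R] (B : Module.Basis (Fin 7) ℤ R)
  (hone : B 0 = 1)
  (hmul : ∀ j k : Fin 7, B j * B k =
      ∑ m ∈ Finset.univ.filter (fun m : Fin 7 =>
        m.val % 2 = (j.val + k.val) % 2 ∧
        j.val - k.val ≤ m.val ∧ k.val - j.val ≤ m.val ∧
        m.val ≤ j.val + k.val ∧ m.val ≤ 12 - (j.val + k.val)), B m)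

include hmul

private lemma p22 : B 2 * B 2 = B 0 + B 2 + B 4 := by
  rw [hmul, Finset.sum_filter, Fin.sum_univ_seven]
  norm_num [show ((0:Fin 7):ℕ)=0 from rfl, show ((1:Fin 7):ℕ)=1 from rfl,
    show ((2:Fin 7):ℕ)=2 from rfl, show ((3:Fin 7):ℕ)=3 from rfl,
    show ((4:Fin 7):ℕ)=4 from rfl, show ((5:Fin 7):ℕ)=5 from rfl,
    show ((6:Fin 7):ℕ)=6 from rfl]

private lemma p24 : B 2 * B 4 = B 2 + B 4 + B 6 := by
  rw [hmul, Finset.sum_filter, Fin.sum_univ_seven]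
  norm_num [show ((0:Fin 7):ℕ)=0 from rfl, show ((1:Fin 7):ℕ)=1 from rfl,
    show ((2:Fin 7):ℕ)=2 from rfl, show ((3:Fin 7):ℕ)=3 from rfl,
    show ((4:Fin 7):ℕ)=4 from rfl, show ((5:Fin 7):ℕ)=5 from rfl,
    show ((6:Fin 7):ℕ)=6 from rfl]

private lemma p26 : B 2 * B 6 = B 4 := by
  rw [hmul, Finset.sum_filter, Fin.sum_univ_seven]
  norm_num [show ((0:Fin 7):ℕ)=0 from rfl, show ((1:Fin 7):ℕ)=1 from rfl,
    show ((2:Fin 7):ℕ)=2 from rfl, show ((3:Fin 7):ℕ)=3 from rfl,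
    show ((4:Fin 7):ℕ)=4 from rfl, show ((5:Fin 7):ℕ)=5 from rfl,
    show ((6:Fin 7):ℕ)=6 from rfl]

private lemma p44 : B 4 * B 4 = B 0 + B 2 + B 4 := by
  rw [hmul, Finset.sum_filter, Fin.sum_univ_seven]
  norm_num [show ((0:Fin 7):ℕ)=0 from rfl, show ((1:Fin 7):ℕ)=1 from rfl,
    show ((2:Fin 7):ℕ)=2 from rfl, show ((3:Fin 7):ℕ)=3 from rfl,
    show ((4:Fin 7):ℕ)=4 from rfl, show ((5:Fin 7):ℕ)=5 from rfl,
    show ((6:Fin 7):ℕ)=6 from rfl]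

private lemma p46 : B 4 * B 6 = B 2 := by
  rw [hmul, Finset.sum_filter, Fin.sum_univ_seven]
  norm_num [show ((0:Fin 7):ℕ)=0 from rfl, show ((1:Fin 7):ℕ)=1 from rfl,
    show ((2:Fin 7):ℕ)=2 from rfl, show ((3:Fin 7):ℕ)=3 from rfl,
    show ((4:Fin 7):ℕ)=4 from rfl, show ((5:Fin 7):ℕ)=5 from rfl,
    show ((6:Fin 7):ℕ)=6 from rfl]

private lemma p66 : B 6 * B 6 = B 0 := by
  rw [hmul, Finset.sum_filter, Fin.sum_univ_seven]
  norm_num [show ((0:Fin 7):ℕ)=0 from rfl, show ((1:Fin 7):ℕ)=1 from rfl,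
    show ((2:Fin 7):ℕ)=2 from rfl, show ((3:Fin 7):ℕ)=3 from rfl,
    show ((4:Fin 7):ℕ)=4 from rfl, show ((5:Fin 7):ℕ)=5 from rfl,
    show ((6:Fin 7):ℕ)=6 from rfl]

omit hmul

private lemma hgen (i : Fin 4) :
    B (evenIdx7 i) = B 0 ∨ B (evenIdx7 i) = B 2 ∨ B (evenIdx7 i) = B 4 ∨
      B (evenIdx7 i) = B 6 := by
  fin_cases i
  · exact Or.inl rfl
  · exact Or.inr (Or.inl rfl)
  · exact Or.inr (Or.inr (Or.inl rfl))
  · exact Or.inr (Or.inr (Or.inr rfl))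

private lemma m0 : B 0 ∈ Submodule.span ℤ (evenBasisSet7 B) :=
  Submodule.subset_span ⟨0, rfl⟩
private lemma m2 : B 2 ∈ Submodule.span ℤ (evenBasisSet7 B) :=
  Submodule.subset_span ⟨1, rfl⟩
private lemma m4 : B 4 ∈ Submodule.span ℤ (evenBasisSet7 B) :=
  Submodule.subset_span ⟨2, rfl⟩
private lemma m6 : B 6 ∈ Submodule.span ℤ (evenBasisSet7 B) :=
  Submodule.subset_span ⟨3, rfl⟩

include hone hmul

private lemma prodmem (i j : Fin 4) :
    B (evenIdx7 i) * B (evenIdx7 j) ∈ Submodule.span ℤ (evenBasisSet7 B) := by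
  rcases hgen B i with h | h | h | h <;> rw [h] <;>
    rcases hgen B j with h' | h' | h' | h' <;> rw [h']
  · rw [hone, one_mul]; exact hone ▸ m0 B
  · rw [hone, one_mul]; exact m2 B
  · rw [hone, one_mul]; exact m4 B
  · rw [hone, one_mul]; exact m6 B
  · rw [hone, mul_one]; exact m2 B
  · rw [p22 B hmul]; exact add_mem (add_mem (m0 B) (m2 B)) (m4 B)
  · rw [p24 B hmul]; exact add_mem (add_mem (m2 B) (m4 B)) (m6 B)
  · rw [p26 B hmul]; exact m4 B
  · rw [hone, mul_one]; exact m4 B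
  · rw [mul_comm, p24 B hmul]; exact add_mem (add_mem (m2 B) (m4 B)) (m6 B)
  · rw [p44 B hmul]; exact add_mem (add_mem (m0 B) (m2 B)) (m4 B)
  · rw [p46 B hmul]; exact m2 B
  · rw [hone, mul_one]; exact m6 B
  · rw [mul_comm, p26 B hmul]; exact m4 B
  · rw [mul_comm, p46 B hmul]; exact m2 B
  · rw [p66 B hmul]; exact m0 B

private lemma span_closed :
    ∀ x ∈ Submodule.span ℤ (evenBasisSet7 B), ∀ y ∈ Submodule.span ℤ (evenBasisSet7 B),
      x * y ∈ Submodule.span ℤ (evenBasisSet7 B) := by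
  intro x hx y hy
  induction hx, hy using Submodule.span_induction₂ with
  | mem_mem x y hx hy =>
      obtain ⟨i, rfl⟩ := hx
      obtain ⟨j, rfl⟩ := hy
      exact prodmem B hone hmul i j
  | zero_left y hy => simp
  | zero_right x hx => simp
  | add_left x y z hx hy hz h1 h2 => rw [add_mul]; exact add_mem h1 h2
  | add_right x y z hx hy hz h1 h2 => rw [mul_add]; exact add_mem h1 h2
  | smul_left r x y hx hy h => rw [smul_mul_assoc]; exact Submodule.smul_mem _ _ h
  | smul_right r x y hx hy h => rw [mul_smul_comm]; exact Submodule.smul_mem _ _ h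

private lemma adjoin_eq :
    Subalgebra.toSubmodule (Algebra.adjoin ℤ (evenBasisSet7 B)) =
      Submodule.span ℤ (evenBasisSet7 B) := by
  have h1 : (1 : R) ∈ Submodule.span ℤ (evenBasisSet7 B) := hone ▸ m0 B
  have hadj : Algebra.adjoin ℤ (evenBasisSet7 B) =
      (Submodule.span ℤ (evenBasisSet7 B)).toSubalgebra h1
        (fun x y hx hy => span_closed B hone hmul x hx y hy) := by
    apply le_antisymm
    · exact Algebra.adjoin_le fun x hx => Submodule.subset_span hx
    · intro x hx
      have hle : Submodule.span ℤ (evenBasisSet7 B) ≤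
          Subalgebra.toSubmodule (Algebra.adjoin ℤ (evenBasisSet7 B)) :=
        Submodule.span_le.2 fun z hz => Algebra.subset_adjoin hz
      exact hle hx
  rw [hadj]
  rfl


set_option linter.unusedSectionVars false

omit hone hmul in
private lemma d_inj : Function.Injective (evenBasisGen7 B) := by
  intro i j h
  have h1 : B (evenIdx7 i) = B (evenIdx7 j) := congrArg Subtype.val h
  have h2 : 2 * i.val = 2 * j.val := congrArg Fin.val (B.injective h1)
  exact Fin.ext (by omega)

omit hone hmul in
private lemma fin4cases : ∀ a : Fin 4, a = 0 ∨ a = 1 ∨ a = 2 ∨ a = 3 := by decide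

omit hmul in
private lemma done1 : evenBasisGen7 B 0 = 1 := Subtype.ext hone

omit hone in
private lemma q11 : evenBasisGen7 B 1 * evenBasisGen7 B 1 =
    evenBasisGen7 B 0 + evenBasisGen7 B 1 + evenBasisGen7 B 2 :=
  Subtype.ext (p22 B hmul)

omit hone in
private lemma q12 : evenBasisGen7 B 1 * evenBasisGen7 B 2 =
    evenBasisGen7 B 1 + evenBasisGen7 B 2 + evenBasisGen7 B 3 :=
  Subtype.ext (p24 B hmul)

omit hone in
private lemma q13 : evenBasisGen7 B 1 * evenBasisGen7 B 3 = evenBasisGen7 B 2 :=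
  Subtype.ext (p26 B hmul)

omit hone in
private lemma q22 : evenBasisGen7 B 2 * evenBasisGen7 B 2 =
    evenBasisGen7 B 0 + evenBasisGen7 B 1 + evenBasisGen7 B 2 :=
  Subtype.ext (p44 B hmul)

omit hone in
private lemma q23 : evenBasisGen7 B 2 * evenBasisGen7 B 3 = evenBasisGen7 B 1 :=
  Subtype.ext (p46 B hmul)

omit hone in
private lemma q33 : evenBasisGen7 B 3 * evenBasisGen7 B 3 = evenBasisGen7 B 0 :=
  Subtype.ext (p66 B hmul)

private lemma spand :
    Submodule.span ℤ (Set.range (evenBasisGen7 B)) = ⊤ := by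
  apply Submodule.map_injective_of_injective
    (Submodule.injective_subtype
      (Subalgebra.toSubmodule (Algebra.adjoin ℤ (evenBasisSet7 B))))
  rw [Submodule.map_span, Submodule.map_subtype_top]
  have himg : (Subalgebra.toSubmodule (Algebra.adjoin ℤ (evenBasisSet7 B))).subtype ''
      Set.range (evenBasisGen7 B) = evenBasisSet7 B := by
    ext x
    constructor
    · rintro ⟨_, ⟨i, rfl⟩, rfl⟩
      exact ⟨i, rfl⟩
    · rintro ⟨i, rfl⟩
      exact ⟨evenBasisGen7 B i, ⟨i, rfl⟩, rfl⟩
  rw [himg]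
  exact (adjoin_eq B hone hmul).symm

private lemma dli : LinearIndependent ℤ (evenBasisGen7 B) := by
  have hinj : Function.Injective (fun i : Fin 4 => evenIdx7 i) := by
    intro i j h
    have h2 : 2 * i.val = 2 * j.val := congrArg Fin.val h
    exact Fin.ext (by omega)
  have h : LinearIndependent ℤ (fun i : Fin 4 => B (evenIdx7 i)) :=
    B.linearIndependent.comp _ hinj
  exact LinearIndependent.of_comp
    (Subalgebra.toSubmodule (Algebra.adjoin ℤ (evenBasisSet7 B))).subtype h

private noncomputable def CB : Module.Basis (Fin 4) ℤ ↥(Algebra.adjoin ℤ (evenBasisSet7 B)) :=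
  Module.Basis.mk (dli B hone hmul) (spand B hone hmul).ge

private lemma CB_apply (i : Fin 4) : CB B hone hmul i = evenBasisGen7 B i :=
  Module.Basis.mk_apply _ _ i

private noncomputable def eτ :
    ↥(Algebra.adjoin ℤ (evenBasisSet7 B)) ≃ₗ[ℤ] ↥(Algebra.adjoin ℤ (evenBasisSet7 B)) :=
  (CB B hone hmul).equiv (CB B hone hmul) (Equiv.swap 1 2)

private lemma eτ_apply (i : Fin 4) :
    eτ B hone hmul (evenBasisGen7 B i) = evenBasisGen7 B (Equiv.swap 1 2 i) := by
  rw [← CB_apply B hone hmul, ← CB_apply B hone hmul, eτ, Module.Basis.equiv_apply]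

private lemma eτ0 : eτ B hone hmul (evenBasisGen7 B 0) = evenBasisGen7 B 0 := by
  rw [eτ_apply, show (Equiv.swap (1 : Fin 4) 2) 0 = 0 from by decide]
private lemma eτ1 : eτ B hone hmul (evenBasisGen7 B 1) = evenBasisGen7 B 2 := by
  rw [eτ_apply, show (Equiv.swap (1 : Fin 4) 2) 1 = 2 from by decide]
private lemma eτ2 : eτ B hone hmul (evenBasisGen7 B 2) = evenBasisGen7 B 1 := by
  rw [eτ_apply, show (Equiv.swap (1 : Fin 4) 2) 2 = 1 from by decide]
private lemma eτ3 : eτ B hone hmul (evenBasisGen7 B 3) = evenBasisGen7 B 3 := by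
  rw [eτ_apply, show (Equiv.swap (1 : Fin 4) 2) 3 = 3 from by decide]

private lemma eτ_mul (x y : ↥(Algebra.adjoin ℤ (evenBasisSet7 B))) :
    eτ B hone hmul (x * y) = eτ B hone hmul x * eτ B hone hmul y := by
  have h1 := done1 B hone
  have e0 := eτ0 B hone hmul; have e1 := eτ1 B hone hmul
  have e2 := eτ2 B hone hmul; have e3 := eτ3 B hone hmul
  have em1 : eτ B hone hmul 1 = 1 := by rw [← h1, e0, h1]
  have hbi : ∀ i j : Fin 4,
      eτ B hone hmul (evenBasisGen7 B i * evenBasisGen7 B j) =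
      eτ B hone hmul (evenBasisGen7 B i) * eτ B hone hmul (evenBasisGen7 B j) := by
    intro i j
    rcases fin4cases i with rfl | rfl | rfl | rfl <;>
      rcases fin4cases j with rfl | rfl | rfl | rfl
    · rw [h1, one_mul, em1, one_mul]
    · rw [h1, one_mul, em1, one_mul]
    · rw [h1, one_mul, em1, one_mul]
    · rw [h1, one_mul, em1, one_mul]
    · rw [h1, mul_one, em1, mul_one]
    · rw [q11 B hmul, map_add, map_add, e0, e1, e2, q22 B hmul]; ring
    · rw [q12 B hmul, map_add, map_add, e1, e2, e3, mul_comm, q12 B hmul]; ring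
    · rw [q13 B hmul, e2, e1, e3, q23 B hmul]
    · rw [h1, mul_one, em1, mul_one]
    · rw [mul_comm, q12 B hmul, map_add, map_add, e1, e2, e3, q12 B hmul]; ring
    · rw [q22 B hmul, map_add, map_add, e0, e1, e2, q11 B hmul]; ring
    · rw [q23 B hmul, e1, e2, e3, q13 B hmul]
    · rw [h1, mul_one, em1, mul_one]
    · rw [mul_comm, q13 B hmul, e2, e3, e1, mul_comm, q23 B hmul]
    · rw [mul_comm, q23 B hmul, e1, e3, e2, mul_comm, q13 B hmul]
    · rw [q33 B hmul, e0, e3, q33 B hmul]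
  have hext : (LinearMap.mul ℤ ↥(Algebra.adjoin ℤ (evenBasisSet7 B))).compr₂
        (eτ B hone hmul : _ →ₗ[ℤ] _) =
      (LinearMap.mul ℤ ↥(Algebra.adjoin ℤ (evenBasisSet7 B))).compl₁₂
        (eτ B hone hmul : _ →ₗ[ℤ] _) (eτ B hone hmul : _ →ₗ[ℤ] _) := by
    refine LinearMap.ext_basis (CB B hone hmul) (CB B hone hmul) fun i j => ?_
    simp only [LinearMap.compr₂_apply, LinearMap.mul_apply', LinearMap.compl₁₂_apply,
      LinearEquiv.coe_coe, CB_apply]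
    exact hbi i j
  have h2 := LinearMap.congr_fun (LinearMap.congr_fun hext x) y
  simpa only [LinearMap.compr₂_apply, LinearMap.mul_apply', LinearMap.compl₁₂_apply,
    LinearEquiv.coe_coe] using h2

private noncomputable def tau : RingAut ↥(Algebra.adjoin ℤ (evenBasisSet7 B)) where
  toFun := eτ B hone hmul
  invFun := (eτ B hone hmul).symm
  left_inv := (eτ B hone hmul).left_inv
  right_inv := (eτ B hone hmul).right_inv
  map_mul' := eτ_mul B hone hmul
  map_add' := (eτ B hone hmul).map_add

private lemma tau_apply (x : ↥(Algebra.adjoin ℤ (evenBasisSet7 B))) :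
    tau B hone hmul x = eτ B hone hmul x := rfl

private lemma t0 : tau B hone hmul (evenBasisGen7 B 0) = evenBasisGen7 B 0 :=
  (tau_apply B hone hmul _).trans (eτ0 B hone hmul)
private lemma t1 : tau B hone hmul (evenBasisGen7 B 1) = evenBasisGen7 B 2 :=
  (tau_apply B hone hmul _).trans (eτ1 B hone hmul)
private lemma t2 : tau B hone hmul (evenBasisGen7 B 2) = evenBasisGen7 B 1 :=
  (tau_apply B hone hmul _).trans (eτ2 B hone hmul)
private lemma t3 : tau B hone hmul (evenBasisGen7 B 3) = evenBasisGen7 B 3 :=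
  (tau_apply B hone hmul _).trans (eτ3 B hone hmul)

private lemma ring_ext (f g : RingAut ↥(Algebra.adjoin ℤ (evenBasisSet7 B)))
    (h : ∀ i, f (evenBasisGen7 B i) = g (evenBasisGen7 B i)) : f = g := by
  refine RingEquiv.ext fun x => ?_
  have hx : x ∈ Submodule.span ℤ (Set.range (evenBasisGen7 B)) := by
    rw [spand B hone hmul]; trivial
  induction hx using Submodule.span_induction with
  | mem z hz => obtain ⟨i, rfl⟩ := hz; exact h i
  | zero => simp
  | add a b _ _ ha hb => rw [map_add, map_add, ha, hb]
  | smul a z _ hz => rw [map_zsmul, map_zsmul, hz]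

private lemma sum_ne_zero :
    evenBasisGen7 B 1 + evenBasisGen7 B 2 ≠ 0 := by
  intro hcon
  have hR : B 2 + B 4 = (0 : R) := by
    have := congrArg Subtype.val hcon
    exact this
  have := congrArg (fun z => (B.repr z) 2) hR
  simp [Finsupp.single_apply] at this

private lemma uniq (f : RingAut ↥(Algebra.adjoin ℤ (evenBasisSet7 B)))
    (hf : ∃ π : Equiv.Perm (Fin 4), ∀ i : Fin 4,
      f (evenBasisGen7 B i) = evenBasisGen7 B (π i)) :
    f = RingEquiv.refl _ ∨ f = tau B hone hmul := by
  obtain ⟨π, hπ⟩ := hf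
  have hd := d_inj B
  have h1 := done1 B hone
  have hπ0 : π 0 = 0 := by
    apply hd
    rw [← hπ 0, h1, map_one]
  have hπ3 : π 3 = 3 := by
    have hsq : evenBasisGen7 B (π 3) * evenBasisGen7 B (π 3) = evenBasisGen7 B 0 := by
      rw [← hπ 3, ← map_mul, q33 B hmul, h1, map_one]
    rcases fin4cases (π 3) with h | h | h | h
    · exact absurd (π.injective (hπ0.trans h.symm)) (by decide)
    · rw [h, q11 B hmul] at hsq
      exact absurd (by linear_combination hsq) (sum_ne_zero B hone hmul)
    · rw [h, q22 B hmul] at hsq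
      exact absurd (by linear_combination hsq) (sum_ne_zero B hone hmul)
    · exact h
  have hπ1 : π 1 = 1 ∨ π 1 = 2 := by
    rcases fin4cases (π 1) with h | h | h | h
    · exact absurd (π.injective (hπ0.trans h.symm)) (by decide)
    · exact Or.inl h
    · exact Or.inr h
    · exact absurd (π.injective (hπ3.trans h.symm)) (by decide)
  have hπ2 : π 2 = 1 ∨ π 2 = 2 := by
    rcases fin4cases (π 2) with h | h | h | h
    · exact absurd (π.injective (hπ0.trans h.symm)) (by decide)
    · exact Or.inl h
    · exact Or.inr h
    · exact absurd (π.injective (hπ3.trans h.symm)) (by decide)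
  rcases hπ1 with h1' | h1'
  · left
    have h2' : π 2 = 2 := by
      rcases hπ2 with h | h
      · exact absurd (π.injective (h1'.trans h.symm)) (by decide)
      · exact h
    apply ring_ext B hone hmul
    intro i
    rcases fin4cases i with rfl | rfl | rfl | rfl <;>
      simp only [hπ, hπ0, h1', h2', hπ3, RingEquiv.refl_apply]
  · right
    have h2' : π 2 = 1 := by
      rcases hπ2 with h | h
      · exact h
      · exact absurd (π.injective (h1'.trans h.symm)) (by decide)
    apply ring_ext B hone hmul
    intro i
    rcases fin4cases i with rfl | rfl | rfl | rfl <;>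
      simp only [hπ, hπ0, h1', h2', hπ3, t0 B hone hmul, t1 B hone hmul,
        t2 B hone hmul, t3 B hone hmul]

private lemma tau_ne : tau B hone hmul ≠ RingEquiv.refl _ := by
  intro hcon
  have h : tau B hone hmul (evenBasisGen7 B 1) = evenBasisGen7 B 1 := by
    rw [hcon]; rfl
  have h2 : evenBasisGen7 B 2 = evenBasisGen7 B 1 := (t1 B hone hmul).symm.trans h
  exact absurd (d_inj B h2) (by decide)

end AdA7Aux


/-- In (a realization of) the fusion ring `R_7` of the `A_7` fusion
categories, the `ℤ`-span `S` of `b_0, b_2, b_4, b_6` is closed under multiplication (it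
is the fusion ring of `ad(A_7)`).  The `ℤ`-linear map fixing `b_0, b_6` and exchanging
`b_2, b_4` is a based ring automorphism of `S`, and it is the unique based automorphism
of `S` other than the identity; in particular the group of based automorphisms of the
fusion ring of `ad(A_7)` is cyclic of order `2`. -/
theorem adA7_fusion_ring_based_automorphism_group
    {R : Type*} [CommRing R] (B : Module.Basis (Fin 7) ℤ R)
    (hone : B 0 = 1)
    (hmul : ∀ j k : Fin 7, B j * B k =
      ∑ m ∈ Finset.univ.filter (fun m : Fin 7 =>
        m.val % 2 = (j.val + k.val) % 2 ∧
        j.val - k.val ≤ m.val ∧ k.val - j.val ≤ m.val ∧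
        m.val ≤ j.val + k.val ∧ m.val ≤ 12 - (j.val + k.val)), B m) :
    (∀ x ∈ Submodule.span ℤ (evenBasisSet7 B), ∀ y ∈ Submodule.span ℤ (evenBasisSet7 B),
        x * y ∈ Submodule.span ℤ (evenBasisSet7 B)) ∧
    (Subalgebra.toSubmodule (Algebra.adjoin ℤ (evenBasisSet7 B)) =
        Submodule.span ℤ (evenBasisSet7 B)) ∧
    ∃ τ : RingAut ↥(Algebra.adjoin ℤ (evenBasisSet7 B)),
      τ (evenBasisGen7 B 0) = evenBasisGen7 B 0 ∧
      τ (evenBasisGen7 B 1) = evenBasisGen7 B 2 ∧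
      τ (evenBasisGen7 B 2) = evenBasisGen7 B 1 ∧
      τ (evenBasisGen7 B 3) = evenBasisGen7 B 3 ∧
      τ ≠ RingEquiv.refl _ ∧
      (∀ f : RingAut ↥(Algebra.adjoin ℤ (evenBasisSet7 B)),
        (∃ π : Equiv.Perm (Fin 4), ∀ i : Fin 4,
          f (evenBasisGen7 B i) = evenBasisGen7 B (π i)) →
        f = RingEquiv.refl _ ∨ f = τ) := by
  exact ⟨AdA7Aux.span_closed B hone hmul, AdA7Aux.adjoin_eq B hone hmul,
    AdA7Aux.tau B hone hmul, AdA7Aux.t0 B hone hmul, AdA7Aux.t1 B hone hmul,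
    AdA7Aux.t2 B hone hmul, AdA7Aux.t3 B hone hmul, AdA7Aux.tau_ne B hone hmul,
    AdA7Aux.uniq B hone hmul⟩
end

section
/- A permutation π of the basis {1, a, b, c, P, Q} of the fusion ring R of ad(D_10) extends to a ring automorphism of R if and only if π fixes 1, b and c and permutes the three elements a, P, Q among themselves. Consequently, the group of based automorphisms of R is isomorphic to the symmetric group S_3, acting by arbitrary permutations of {a, P, Q}. -/
private def tabD10 : ℕ → ℕ → List ℤ
  | 0, 0 => [1,0,0,0,0,0]
  | 0, 1 => [0,1,0,0,0,0]
  | 0, 2 => [0,0,1,0,0,0]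
  | 0, 3 => [0,0,0,1,0,0]
  | 0, 4 => [0,0,0,0,1,0]
  | 0, 5 => [0,0,0,0,0,1]
  | 1, 1 => [1,1,1,0,0,0]
  | 1, 2 => [0,1,1,1,0,0]
  | 1, 3 => [0,0,1,1,1,1]
  | 1, 4 => [0,0,0,1,0,1]
  | 1, 5 => [0,0,0,1,1,0]
  | 2, 2 => [1,1,1,1,1,1]
  | 2, 3 => [0,1,1,2,1,1]
  | 2, 4 => [0,0,1,1,1,0]
  | 2, 5 => [0,0,1,1,0,1]
  | 3, 3 => [1,1,2,2,1,1]
  | 3, 4 => [0,1,1,1,0,1]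
  | 3, 5 => [0,1,1,1,1,0]
  | 4, 4 => [1,0,1,0,1,0]
  | 4, 5 => [0,1,0,1,0,0]
  | 5, 5 => [1,0,1,0,0,1]
  | _, _ => []

private def NcD10 (i j k : Fin 6) : ℤ :=
  (tabD10 (min i.val j.val) (max i.val j.val)).getD k.val 0

private lemma d1D10 : ∀ x : Fin 6, x ≠ 0 → x ≠ 2 → x ≠ 3 → (x = 1 ∨ x = 4 ∨ x = 5) := by
  decide

private lemma d2D10 : ∀ x : Fin 6, NcD10 x x x = 2 → x = 3 := by decide

private lemma d3D10 : ∀ x : Fin 6, NcD10 x 3 x = 1 → x = 2 := by decide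

private def vD10 : Fin 3 → Fin 6 := ![1,4,5]

private def pmD10 (g : Equiv.Perm (Fin 3)) : Fin 6 → Fin 6 :=
  ![0, vD10 (g 0), 2, 3, vD10 (g 1), vD10 (g 2)]

private lemma pmvD10 (g : Equiv.Perm (Fin 3)) (j : Fin 3) :
    pmD10 g (vD10 j) = vD10 (g j) := by fin_cases j <;> rfl

private def rhoD10 (g : Equiv.Perm (Fin 3)) : Equiv.Perm (Fin 6) where
  toFun := pmD10 g
  invFun := pmD10 g⁻¹
  left_inv := by
    intro i
    fin_cases i
    · rfl
    · show pmD10 g⁻¹ (vD10 (g 0)) = vD10 0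
      rw [pmvD10, Equiv.Perm.inv_def, Equiv.symm_apply_apply]
    · rfl
    · rfl
    · show pmD10 g⁻¹ (vD10 (g 1)) = vD10 1
      rw [pmvD10, Equiv.Perm.inv_def, Equiv.symm_apply_apply]
    · show pmD10 g⁻¹ (vD10 (g 2)) = vD10 2
      rw [pmvD10, Equiv.Perm.inv_def, Equiv.symm_apply_apply]
  right_inv := by
    intro i
    fin_cases i
    · rfl
    · show pmD10 g (vD10 (g⁻¹ 0)) = vD10 0
      rw [pmvD10, Equiv.Perm.inv_def, Equiv.apply_symm_apply]
    · rfl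
    · rfl
    · show pmD10 g (vD10 (g⁻¹ 1)) = vD10 1
      rw [pmvD10, Equiv.Perm.inv_def, Equiv.apply_symm_apply]
    · show pmD10 g (vD10 (g⁻¹ 2)) = vD10 2
      rw [pmvD10, Equiv.Perm.inv_def, Equiv.apply_symm_apply]

private lemma rhovD10 (g : Equiv.Perm (Fin 3)) (j : Fin 3) :
    rhoD10 g (vD10 j) = vD10 (g j) := pmvD10 g j

private lemma rhomulD10 (g h : Equiv.Perm (Fin 3)) (i : Fin 6) :
    rhoD10 (g * h) i = rhoD10 g (rhoD10 h i) := by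
  fin_cases i
  · rfl
  · show rhoD10 (g * h) (vD10 0) = rhoD10 g (rhoD10 h (vD10 0))
    rw [rhovD10, rhovD10, rhovD10]; rfl
  · rfl
  · rfl
  · show rhoD10 (g * h) (vD10 1) = rhoD10 g (rhoD10 h (vD10 1))
    rw [rhovD10, rhovD10, rhovD10]; rfl
  · show rhoD10 (g * h) (vD10 2) = rhoD10 g (rhoD10 h (vD10 2))
    rw [rhovD10, rhovD10, rhovD10]; rfl

private def wD10 : Fin 6 → Fin 3 := ![0,0,0,0,1,2]

private lemma hvwD10 : ∀ x : Fin 6, (x = 1 ∨ x = 4 ∨ x = 5) → vD10 (wD10 x) = x := by decide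

private lemma hwvD10 : ∀ j : Fin 3, wD10 (vD10 j) = j := by decide

private lemma vinjD10 : ∀ a b : Fin 3, vD10 a = vD10 b → a = b := by decide

set_option maxHeartbeats 8000000 in
/-- Let `R` be (a realization of) the fusion ring of `ad(D_10)`: a
commutative ring, free as a `ℤ`-module with basis `1 = B 0, a = B 1, b = B 2, c = B 3,
P = B 4, Q = B 5` and the stated multiplication table.  A permutation `π` of the basis
extends to a ring automorphism of `R` iff `π` fixes `1, b, c` (hence permutes `a, P, Q`
among themselves); consequently the group of based automorphisms of `R` is isomorphic to
`S_3`, acting by arbitrary permutations of `{a, P, Q}`. -/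
theorem adD10_based_automorphism_group
    {R : Type*} [CommRing R] (B : Module.Basis (Fin 6) ℤ R)
    (h1 : B 0 = 1)
    (haa : B 1 * B 1 = B 0 + B 1 + B 2)
    (hab : B 1 * B 2 = B 1 + B 2 + B 3)
    (hac : B 1 * B 3 = B 2 + B 3 + B 4 + B 5)
    (haP : B 1 * B 4 = B 3 + B 5)
    (haQ : B 1 * B 5 = B 3 + B 4)
    (hbb : B 2 * B 2 = B 0 + B 1 + B 2 + B 3 + B 4 + B 5)
    (hbc : B 2 * B 3 = B 1 + B 2 + (2 : ℤ) • B 3 + B 4 + B 5)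
    (hbP : B 2 * B 4 = B 2 + B 3 + B 4)
    (hbQ : B 2 * B 5 = B 2 + B 3 + B 5)
    (hcc : B 3 * B 3 = B 0 + B 1 + (2 : ℤ) • B 2 + (2 : ℤ) • B 3 + B 4 + B 5)
    (hcP : B 3 * B 4 = B 1 + B 2 + B 3 + B 5)
    (hcQ : B 3 * B 5 = B 1 + B 2 + B 3 + B 4)
    (hPP : B 4 * B 4 = B 0 + B 2 + B 4)
    (hQQ : B 5 * B 5 = B 0 + B 2 + B 5)
    (hPQ : B 4 * B 5 = B 1 + B 3) :
    (∀ π : Equiv.Perm (Fin 6),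
      (∃ f : RingAut R, ∀ i : Fin 6, f (B i) = B (π i)) ↔
        (π 0 = 0 ∧ π 2 = 2 ∧ π 3 = 3)) ∧
    ∃ Φ : Equiv.Perm (Fin 3) →* RingAut R,
      Function.Injective Φ ∧
      (∀ f : RingAut R,
        (∃ π : Equiv.Perm (Fin 6), ∀ i : Fin 6, f (B i) = B (π i)) ↔
          f ∈ Set.range Φ) ∧
      (∀ g : Equiv.Perm (Fin 3), ∀ j : Fin 3,
        Φ g (B (![1, 4, 5] j)) = B (![1, 4, 5] (g j))) := by
  -- multiplication table in structure-constant form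
  have hmul : ∀ i j : Fin 6, B i * B j = ∑ k, NcD10 i j k • B k := by
    intro i j
    fin_cases i <;> fin_cases j <;>
      · rw [Fin.sum_univ_six]
        norm_num [NcD10, tabD10, Fin.coe_ofNat_eq_mod]
        first
        | rfl
        | (rw [h1]; first | ring1 | (ring_nf; rfl))
        | linear_combination (norm := first | ring1 | (simp only [zsmul_eq_mul]; push_cast; ring1)) haa
        | linear_combination (norm := first | ring1 | (simp only [zsmul_eq_mul]; push_cast; ring1)) hab
        | linear_combination (norm := first | ring1 | (simp only [zsmul_eq_mul]; push_cast; ring1)) hac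
        | linear_combination (norm := first | ring1 | (simp only [zsmul_eq_mul]; push_cast; ring1)) haP
        | linear_combination (norm := first | ring1 | (simp only [zsmul_eq_mul]; push_cast; ring1)) haQ
        | linear_combination (norm := first | ring1 | (simp only [zsmul_eq_mul]; push_cast; ring1)) hbb
        | linear_combination (norm := first | ring1 | (simp only [zsmul_eq_mul]; push_cast; ring1)) hbc
        | linear_combination (norm := first | ring1 | (simp only [zsmul_eq_mul]; push_cast; ring1)) hbP
        | linear_combination (norm := first | ring1 | (simp only [zsmul_eq_mul]; push_cast; ring1)) hbQ
        | linear_combination (norm := first | ring1 | (simp only [zsmul_eq_mul]; push_cast; ring1)) hcc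
        | linear_combination (norm := first | ring1 | (simp only [zsmul_eq_mul]; push_cast; ring1)) hcP
        | linear_combination (norm := first | ring1 | (simp only [zsmul_eq_mul]; push_cast; ring1)) hcQ
        | linear_combination (norm := first | ring1 | (simp only [zsmul_eq_mul]; push_cast; ring1)) hPP
        | linear_combination (norm := first | ring1 | (simp only [zsmul_eq_mul]; push_cast; ring1)) hQQ
        | linear_combination (norm := first | ring1 | (simp only [zsmul_eq_mul]; push_cast; ring1)) hPQ
  -- uniqueness of coefficients along a permuted basis
  have huniq : ∀ (π : Equiv.Perm (Fin 6)) (cf df : Fin 6 → ℤ),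
      (∑ k, cf k • B (π k)) = (∑ k, df k • B (π k)) → ∀ k, cf k = df k := by
    intro π cf df h k
    set C : Module.Basis (Fin 6) ℤ R := B.reindex π.symm with hCdef
    have hC : ∀ m, C m = B (π m) := fun m => by
      simp [hCdef, Module.Basis.reindex_apply]
    have h0 : ∑ m, (cf m - df m) • B (π m) = 0 := by
      have e : ∑ m, (cf m - df m) • B (π m)
          = (∑ m, cf m • B (π m)) - ∑ m, df m • B (π m) := by
        rw [← Finset.sum_sub_distrib]
        exact Finset.sum_congr rfl fun m _ => sub_smul _ _ _
      rw [e, h, sub_self]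
    have h0' : ∑ m, (cf m - df m) • C m = 0 := by
      simpa only [hC] using h0
    have := Fintype.linearIndependent_iff.mp C.linearIndependent
      (fun m => cf m - df m) h0' k
    omega
  -- forward direction
  have hfwd : ∀ (π : Equiv.Perm (Fin 6)) (f : RingAut R),
      (∀ i, f (B i) = B (π i)) → π 0 = 0 ∧ π 2 = 2 ∧ π 3 = 3 := by
    intro π f hf
    have h0 : π 0 = 0 := by
      have e : B (π 0) = B 0 := by
        rw [← hf 0, h1, map_one]
      exact B.injective e
    have hNinv : ∀ i j k, NcD10 i j k = NcD10 (π i) (π j) (π k) := by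
      intro i j k
      have e1 : f (B i * B j) = ∑ m, NcD10 i j m • B (π m) := by
        rw [hmul i j, map_sum]
        exact Finset.sum_congr rfl fun m _ => by rw [map_zsmul, hf]
      have e2 : f (B i * B j) = ∑ m, NcD10 (π i) (π j) (π m) • B (π m) := by
        rw [map_mul, hf i, hf j, hmul (π i) (π j)]
        exact (Equiv.sum_comp π (fun m => NcD10 (π i) (π j) m • B m)).symm
      exact huniq π _ _ (e1.symm.trans e2) k
    have h3 : π 3 = 3 := d2D10 (π 3) ((hNinv 3 3 3).symm.trans (by decide))
    have h2 : π 2 = 2 := by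
      have e := (hNinv 2 3 2).symm.trans (by decide : NcD10 2 3 2 = 1)
      rw [h3] at e
      exact d3D10 (π 2) e
    exact ⟨h0, h2, h3⟩
  -- backward construction
  have hbwd : ∀ π : Equiv.Perm (Fin 6), π 0 = 0 → π 2 = 2 → π 3 = 3 →
      ∃ f : RingAut R, ∀ i, f (B i) = B (π i) := by
    intro π e0 e2 e3
    have hne : ∀ x : Fin 6, x ≠ 0 → x ≠ 2 → x ≠ 3 → (π x = 1 ∨ π x = 4 ∨ π x = 5) := by
      intro x hx0 hx2 hx3
      refine d1D10 _ ?_ ?_ ?_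
      · intro h; exact hx0 (π.injective (h.trans e0.symm))
      · intro h; exact hx2 (π.injective (h.trans e2.symm))
      · intro h; exact hx3 (π.injective (h.trans e3.symm))
    have m1 := hne 1 (by decide) (by decide) (by decide)
    have m4 := hne 4 (by decide) (by decide) (by decide)
    have m5 := hne 5 (by decide) (by decide) (by decide)
    have n14 : π 1 ≠ π 4 := fun h => absurd (π.injective h) (by decide)
    have n15 : π 1 ≠ π 5 := fun h => absurd (π.injective h) (by decide)
    have n45 : π 4 ≠ π 5 := fun h => absurd (π.injective h) (by decide)
    have trich : (π 1 = 1 ∧ π 4 = 4 ∧ π 5 = 5) ∨ (π 1 = 1 ∧ π 4 = 5 ∧ π 5 = 4) ∨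
        (π 1 = 4 ∧ π 4 = 1 ∧ π 5 = 5) ∨ (π 1 = 4 ∧ π 4 = 5 ∧ π 5 = 1) ∨
        (π 1 = 5 ∧ π 4 = 1 ∧ π 5 = 4) ∨ (π 1 = 5 ∧ π 4 = 4 ∧ π 5 = 1) := by
      rcases m1 with h|h|h <;> rcases m4 with h'|h'|h' <;> rcases m5 with h''|h''|h'' <;>
        omega
    have hπeq : ∀ i, π i = ![0, π 1, 2, 3, π 4, π 5] i := by
      intro i
      fin_cases i
      exacts [e0, rfl, e2, e3, rfl, rfl]
    have hNinv : ∀ i j k, NcD10 (π i) (π j) (π k) = NcD10 i j k := by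
      rcases trich with ⟨ha,hb,hc⟩|⟨ha,hb,hc⟩|⟨ha,hb,hc⟩|⟨ha,hb,hc⟩|⟨ha,hb,hc⟩|⟨ha,hb,hc⟩ <;>
        · intro i j k
          rw [hπeq i, hπeq j, hπeq k, ha, hb, hc]
          revert i j k
          decide
    let L : R ≃ₗ[ℤ] R := B.equiv B π
    have hL : ∀ i, L (B i) = B (π i) := fun i => by simp [L, Module.Basis.equiv_apply]
    have key : ∀ i j, L (B i * B j) = L (B i) * L (B j) := by
      intro i j
      rw [hmul i j, map_sum, hL, hL, hmul (π i) (π j),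
        ← Equiv.sum_comp π (fun m => NcD10 (π i) (π j) m • B m)]
      exact Finset.sum_congr rfl fun m _ => by rw [map_smul, hL, hNinv]
    have bil : (LinearMap.mul ℤ R).compr₂ L.toLinearMap
        = (LinearMap.mul ℤ R).compl₁₂ L.toLinearMap L.toLinearMap := by
      refine B.ext fun i => B.ext fun j => ?_
      simpa using key i j
    have hmulL : ∀ x y : R, L (x * y) = L x * L y := by
      intro x y
      have := DFunLike.congr_fun (DFunLike.congr_fun bil x) y
      simpa using this
    exact ⟨{ L.toEquiv with map_mul' := hmulL, map_add' := L.map_add }, fun i => hL i⟩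
  -- automorphisms agreeing on the basis coincide
  have autext : ∀ f g : RingAut R, (∀ i, f (B i) = g (B i)) → f = g := by
    intro f g h
    have e : f.toRingHom.toAddMonoidHom.toIntLinearMap = g.toRingHom.toAddMonoidHom.toIntLinearMap :=
      B.ext fun i => by simpa using h i
    exact RingEquiv.ext fun x => by
      have := DFunLike.congr_fun e x
      simpa using this
  refine ⟨fun π => ⟨fun ⟨f, hf⟩ => hfwd π f hf, fun ⟨e0, e2, e3⟩ => hbwd π e0 e2 e3⟩, ?_⟩
  -- the S₃ of automorphisms
  choose F hF using fun g : Equiv.Perm (Fin 3) => hbwd (rhoD10 g) rfl rfl rfl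
  refine ⟨MonoidHom.mk' F ?_, ?_, ?_, ?_⟩
  · intro g h
    refine autext _ _ fun i => ?_
    show F (g * h) (B i) = F g (F h (B i))
    rw [hF, hF, hF, rhomulD10]
  · intro g h e
    refine Equiv.ext fun j => ?_
    have e1 : F g = F h := e
    have e2 : B (rhoD10 g (vD10 j)) = B (rhoD10 h (vD10 j)) := by
      rw [← hF, ← hF, e1]
    have e3 := B.injective e2
    rw [rhovD10, rhovD10] at e3
    exact vinjD10 _ _ e3
  · intro f
    constructor
    · rintro ⟨π, hf⟩
      obtain ⟨e0, e2, e3⟩ := hfwd π f hf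
      have hne : ∀ x : Fin 6, x ≠ 0 → x ≠ 2 → x ≠ 3 →
          (π x = 1 ∨ π x = 4 ∨ π x = 5) := by
        intro x hx0 hx2 hx3
        refine d1D10 _ ?_ ?_ ?_
        · intro h; exact hx0 (π.injective (h.trans e0.symm))
        · intro h; exact hx2 (π.injective (h.trans e2.symm))
        · intro h; exact hx3 (π.injective (h.trans e3.symm))
      have memv : ∀ j : Fin 3, π (vD10 j) = 1 ∨ π (vD10 j) = 4 ∨ π (vD10 j) = 5 := by
        intro j
        fin_cases j
        · exact hne 1 (by decide) (by decide) (by decide)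
        · exact hne 4 (by decide) (by decide) (by decide)
        · exact hne 5 (by decide) (by decide) (by decide)
      have memvInv : ∀ j : Fin 3,
          π⁻¹ (vD10 j) = 1 ∨ π⁻¹ (vD10 j) = 4 ∨ π⁻¹ (vD10 j) = 5 := by
        intro j
        refine d1D10 _ ?_ ?_ ?_ <;> intro h
        · have hh := congrArg π h
          rw [Equiv.Perm.inv_def, Equiv.apply_symm_apply, e0] at hh
          revert hh; fin_cases j <;> decide
        · have hh := congrArg π h
          rw [Equiv.Perm.inv_def, Equiv.apply_symm_apply, e2] at hh
          revert hh; fin_cases j <;> decide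
        · have hh := congrArg π h
          rw [Equiv.Perm.inv_def, Equiv.apply_symm_apply, e3] at hh
          revert hh; fin_cases j <;> decide
      let g : Equiv.Perm (Fin 3) :=
        { toFun := fun j => wD10 (π (vD10 j))
          invFun := fun j => wD10 (π⁻¹ (vD10 j))
          left_inv := fun j => by
            show wD10 (π⁻¹ (vD10 (wD10 (π (vD10 j))))) = j
            rw [hvwD10 _ (memv j), Equiv.Perm.inv_def, Equiv.symm_apply_apply, hwvD10]
          right_inv := fun j => by
            show wD10 (π (vD10 (wD10 (π⁻¹ (vD10 j))))) = j
            rw [hvwD10 _ (memvInv j), Equiv.Perm.inv_def, Equiv.apply_symm_apply, hwvD10] }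
      have hρg : ∀ i, rhoD10 g i = π i := by
        intro i
        fin_cases i
        · exact e0.symm
        · show rhoD10 g (vD10 0) = π (vD10 0)
          rw [rhovD10]
          exact hvwD10 _ (memv 0)
        · exact e2.symm
        · exact e3.symm
        · show rhoD10 g (vD10 1) = π (vD10 1)
          rw [rhovD10]
          exact hvwD10 _ (memv 1)
        · show rhoD10 g (vD10 2) = π (vD10 2)
          rw [rhovD10]
          exact hvwD10 _ (memv 2)
      refine ⟨g, ?_⟩
      show F g = f
      refine autext _ _ fun i => ?_
      rw [hF, hρg, hf]
    · rintro ⟨g, rfl⟩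
      exact ⟨rhoD10 g, fun i => hF g i⟩
  · intro g j
    show F g (B (vD10 j)) = B (vD10 (g j))
    rw [hF, rhovD10]
end
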